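/- Let E be a finite comet quiver whose cycle c has length m, and let v be a vertex of c. Then the set of paths of E that end at v and do not contain the cycle c is finite, and for each i ∈ {0,1,…,m−1} there exists at least one path ending at v, not containing c, whose length is congruent to i modulo m (namely, the terminal subpath of c of length i ending at v). -/

import Mathlib

/-- A quiver (directed graph): vertices, edges, source and range maps. -/
structure Quiv where
  V : Type
  E : Type
  src : E → V
  rng : E → V

namespace Quiv

/-- `es` is a path from `u` to `v` (the empty list is the trivial path at `v`,
in which case `u = v`; a nonempty list is a path `e₁…eₙ` with
`rng eₜ = src eₜ₊₁`, starting at `src e₁ = u` and ending at `rng eₙ = v`). -/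
def IsPathFromTo (G : Quiv) (u : G.V) (es : List G.E) (v : G.V) : Prop :=
  es.Chain' (fun e f => G.rng e = G.src f) ∧
  (es = [] → u = v) ∧
  (∀ e, es.head? = some e → G.src e = u) ∧
  (∀ e, es.getLast? = some e → G.rng e = v)

/-- `es` is a path ending at `v`. -/
def IsPathTo (G : Quiv) (es : List G.E) (v : G.V) : Prop :=
  ∃ u, G.IsPathFromTo u es v

/-- A sink is a vertex emitting no edges. -/
def IsSink (G : Quiv) (v : G.V) : Prop := ∀ e : G.E, G.src e ≠ v

/-- A cycle: a path of positive length ending at its own source, in which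
distinct edges have distinct sources. -/
def IsCycle (G : Quiv) (es : List G.E) : Prop :=
  es ≠ [] ∧ (∃ u, G.IsPathFromTo u es u) ∧
  ∀ e ∈ es, ∀ f ∈ es, e ≠ f → G.src e ≠ G.src f

end Quiv

/-- A path `es` contains the cycle `c` if some rotation of `c` occurs as a
contiguous subpath (infix) of `es`. -/
def Quiv.Contains (G : Quiv) (c es : List G.E) : Prop :=
  ∃ k : ℕ, (c.rotate k) <:+: es

namespace CometAux

abbrev R (G : Quiv) : G.E → G.E → Prop := fun e f => G.rng e = G.src f

variable {G : Quiv} {cs : List G.E}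

lemma chain_step (es : List G.E) (hch : es.Chain' (R G)) (j : ℕ) (h : j + 1 < es.length) :
    G.rng (es[j]'(by omega)) = G.src es[j+1] := by
  have := List.isChain_iff_getElem.mp hch j (by omega)
  simpa [List.get_eq_getElem] using this

lemma src_uniq (hc : G.IsCycle cs) {e f : G.E} (he : e ∈ cs) (hf : f ∈ cs)
    (h : G.src e = G.src f) : e = f := by
  by_contra hne
  exact hc.2.2 e he f hf hne h

lemma gec (l : List G.E) {i j : ℕ} (hi : i < l.length) (h : i = j) :
    l[i] = l[j]'(h ▸ hi) := by subst h; rfl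

lemma cyc_getElem (hc : G.IsCycle cs) (j : ℕ) (hj : j < cs.length) :
    G.rng cs[j] = G.src (cs[(j+1) % cs.length]'(Nat.mod_lt _ (by omega))) := by
  obtain ⟨hne, ⟨u, hch, _, hhd, hlast⟩, _⟩ := hc
  by_cases hj1 : j + 1 < cs.length
  · rw [gec cs (Nat.mod_lt _ (by omega)) (Nat.mod_eq_of_lt hj1)]
    exact chain_step cs hch j hj1
  · have h2 : G.rng (cs.getLast hne) = u :=
      hlast _ (List.getLast?_eq_getLast hne)
    have h3 : G.src (cs.head hne) = u :=
      hhd _ (List.head?_eq_head hne)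
    rw [List.getLast_eq_getElem] at h2
    rw [List.head_eq_getElem] at h3
    rw [gec cs (Nat.mod_lt _ (by omega)) (show (j+1) % cs.length = 0 by
      have : j + 1 = cs.length := by omega
      simp [this])]
    rw [gec cs hj (show j = cs.length - 1 by omega)]
    rw [h2, h3]

lemma cyc_getElem' (hc : G.IsCycle cs) (x : ℕ) (h0 : 0 < cs.length) :
    G.rng (cs[x % cs.length]'(Nat.mod_lt _ h0)) =
      G.src (cs[(x+1) % cs.length]'(Nat.mod_lt _ h0)) := by
  have := cyc_getElem hc (x % cs.length) (Nat.mod_lt _ h0)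
  rw [gec cs (Nat.mod_lt _ h0) (Nat.mod_add_mod x cs.length 1)] at this
  exact this

end CometAux

namespace CometAux

variable {G : Quiv} {cs : List G.E}

lemma closed_walk_mem (hc : G.IsCycle cs)
    (honly : ∀ c' : List G.E, G.IsCycle c' → ∀ e, e ∈ c' ↔ e ∈ cs) :
    ∀ (N : ℕ) (l : List G.E), l.length = N → ∀ (h0 : 0 < l.length),
      l.Chain' (R G) → G.rng (l[l.length - 1]'(by omega)) = G.src (l[0]'h0) →
      ∀ e ∈ l, e ∈ cs := by
  intro N
  induction N using Nat.strong_induction_on with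
  | _ N ih =>
  intro l hlen h0 hch hcl e he
  by_cases hrep : ∃ a b, ∃ (_ : a < b) (hb : b < l.length), G.src (l[a]'(by omega)) = G.src l[b]
  · obtain ⟨a, b, hab, hb, hsrc⟩ := hrep
    -- the inner segment seg = l[a..b) is a shorter closed walk
    have hseglen : ((l.drop a).take (b - a)).length = b - a := by
      simp; omega
    have hsegget : ∀ t, t < b - a → ∀ (h : t < ((l.drop a).take (b - a)).length),
        ((l.drop a).take (b - a))[t]'h = l[a+t]'(by omega) := by
      intro t ht h
      simp
    have hseg0 : 0 < ((l.drop a).take (b - a)).length := by omega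
    have hsegch : ((l.drop a).take (b - a)).Chain' (R G) :=
      hch.infix ((List.take_prefix _ _).isInfix.trans (List.drop_suffix _ _).isInfix)
    have hsegcl : G.rng (((l.drop a).take (b - a))[((l.drop a).take (b - a)).length - 1]'(by omega))
        = G.src (((l.drop a).take (b - a))[0]'hseg0) := by
      rw [hsegget _ (by omega) _, hsegget 0 (by omega) _]
      rw [gec l (by omega) (show a + (((l.drop a).take (b-a)).length - 1) = b - 1 by omega)]
      have hstep := chain_step l hch (b-1) (by omega)
      rw [gec l (by omega) (show b - 1 + 1 = b by omega)] at hstep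
      rw [hstep]
      rw [gec l (by omega) (show a + 0 = a by omega)]
      exact hsrc.symm
    have hsegmem : ∀ e ∈ (l.drop a).take (b - a), e ∈ cs := by
      intro e' he'
      exact ih (b - a) (by omega) _ hseglen hseg0 hsegch hsegcl e' he'
    -- the spliced walk rest = take a ++ drop b is a shorter closed walk
    have hrestlen : (l.take a ++ l.drop b).length = a + (l.length - b) := by
      simp; omega
    have hrest0 : 0 < (l.take a ++ l.drop b).length := by omega
    have hrestch : (l.take a ++ l.drop b).Chain' (R G) := by
      rw [List.Chain', List.isChain_append]
      refine ⟨hch.prefix (List.take_prefix _ _), hch.suffix (List.drop_suffix _ _), ?_⟩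
      intro x hx y hy
      rcases Nat.eq_zero_or_pos a with ha0 | ha0
      · simp [ha0] at hx
      · have htne : l.take a ≠ [] := by
          rw [← List.length_pos_iff, List.length_take]; omega
        have hdne : l.drop b ≠ [] := by
          rw [← List.length_pos_iff, List.length_drop]; omega
        simp only [Option.mem_def, List.getLast?_eq_getLast htne, Option.some_inj] at hx
        simp only [Option.mem_def, List.head?_eq_head hdne, Option.some_inj] at hy
        subst hx; subst hy
        rw [List.getLast_eq_getElem, List.head_eq_getElem]
        have hTl : (l.take a).length = a := by simp; omega
        have e1 : (l.take a)[(l.take a).length - 1]'(by omega) = l[a-1]'(by omega) := by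
          rw [gec (l.take a) (by omega) (show (l.take a).length - 1 = a - 1 by omega)]
          simp
        have e2 : (l.drop b)[0]'(by rw [List.length_drop]; omega) = l[b]'(by omega) := by
          simp
        rw [e1, e2]
        show G.rng (l[a-1]'(by omega)) = G.src (l[b]'(by omega))
        have hstep := chain_step l hch (a-1) (by omega)
        rw [gec l (by omega) (show a - 1 + 1 = a by omega)] at hstep
        rw [hstep]
        exact hsrc
    have hrestcl : G.rng ((l.take a ++ l.drop b)[(l.take a ++ l.drop b).length - 1]'(by omega))
        = G.src ((l.take a ++ l.drop b)[0]'hrest0) := by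
      have hTl : (l.take a).length = a := by simp; omega
      have elast : (l.take a ++ l.drop b)[(l.take a ++ l.drop b).length - 1]'(by omega)
          = l[l.length - 1]'(by omega) := by
        rw [List.getElem_append_right (by omega)]
        rw [gec (l.drop b) (by rw [List.length_drop]; omega)
          (show (l.take a ++ l.drop b).length - 1 - (l.take a).length = l.length - b - 1 by omega)]
        rw [List.getElem_drop]
        exact gec l (by omega) (by omega)
      rw [elast]
      rcases Nat.eq_zero_or_pos a with ha0 | ha0
      · have ehead : (l.take a ++ l.drop b)[0]'hrest0 = l[b]'(by omega) := by
          rw [List.getElem_append_right (by omega)]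
          rw [gec (l.drop b) (by rw [List.length_drop]; omega)
            (show 0 - (l.take a).length = 0 by omega)]
          simp
        rw [ehead, hcl]
        subst ha0
        rw [hsrc]
      · have ehead : (l.take a ++ l.drop b)[0]'hrest0 = l[0]'h0 := by
          rw [List.getElem_append_left (by omega)]
          simp
        rw [ehead, hcl]
    have hrestmem : ∀ e ∈ l.take a ++ l.drop b, e ∈ cs := by
      intro e' he'
      exact ih (a + (l.length - b)) (by omega) _ hrestlen hrest0 hrestch hrestcl e' he'
    -- split membership
    have hsplit : l = l.take a ++ ((l.drop a).take (b - a) ++ l.drop b) := by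
      conv_lhs => rw [← List.take_append_drop a l]
      congr 1
      conv_lhs => rw [← List.take_append_drop (b - a) (l.drop a)]
      congr 1
      rw [List.drop_drop]
      congr 1
      omega
    rw [hsplit] at he
    rcases List.mem_append.mp he with h1 | h2
    · exact hrestmem e (List.mem_append.mpr (Or.inl h1))
    rcases List.mem_append.mp h2 with h3 | h4
    · exact hsegmem e h3
    · exact hrestmem e (List.mem_append.mpr (Or.inr h4))
  · push_neg at hrep
    have hne : l ≠ [] := List.length_pos_iff.mp h0
    have hcyc : G.IsCycle l := by
      refine ⟨hne, ⟨G.src (l.head hne), hch, fun h => absurd h hne, ?_, ?_⟩, ?_⟩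
      · intro f hf
        rw [List.head?_eq_head hne] at hf
        cases hf
        rfl
      · intro f hf
        rw [List.getLast?_eq_getLast hne] at hf
        cases hf
        rw [List.getLast_eq_getElem, List.head_eq_getElem]
        exact hcl
      · intro x hx y hy hxy heq
        obtain ⟨i, hi, hxi⟩ := List.mem_iff_getElem.mp hx
        obtain ⟨j, hj, hyj⟩ := List.mem_iff_getElem.mp hy
        rcases lt_trichotomy i j with h | h | h
        · exact hrep i j h hj (by rw [hxi, hyj]; exact heq)
        · subst h; exact hxy (hxi.symm.trans hyj)
        · exact hrep j i h hi (by rw [hxi, hyj]; exact heq.symm)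
    exact (honly l hcyc e).mp he

end CometAux

namespace CometAux

variable {G : Quiv} {cs : List G.E}

lemma chain_repeat_mem (hc : G.IsCycle cs)
    (honly : ∀ c' : List G.E, G.IsCycle c' → ∀ e, e ∈ c' ↔ e ∈ cs)
    (es : List G.E) (hch : es.Chain' (R G)) {p q : ℕ} (hpq : p < q) (hq : q < es.length)
    (hsrc : G.src (es[p]'(by omega)) = G.src es[q]) : es[p]'(by omega) ∈ cs := by
  have hlen : ((es.drop p).take (q - p)).length = q - p := by
    simp; omega
  have h0 : 0 < ((es.drop p).take (q - p)).length := by omega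
  have hget : ∀ t, t < q - p → ∀ (h : t < ((es.drop p).take (q - p)).length),
      ((es.drop p).take (q - p))[t]'h = es[p+t]'(by omega) := by
    intro t ht h
    simp
  have hcl : G.rng (((es.drop p).take (q - p))[((es.drop p).take (q - p)).length - 1]'(by omega))
      = G.src (((es.drop p).take (q - p))[0]'h0) := by
    rw [hget _ (by omega) _, hget 0 (by omega) _]
    rw [gec es (by omega) (show p + (((es.drop p).take (q - p)).length - 1) = q - 1 by omega)]
    rw [gec es (by omega) (show p + 0 = p by omega)]
    have hstep := chain_step es hch (q-1) (by omega)
    rw [gec es (by omega) (show q - 1 + 1 = q by omega)] at hstep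
    rw [hstep]
    exact hsrc.symm
  have hmem := closed_walk_mem hc honly ((es.drop p).take (q - p)).length _ rfl h0
    (hch.infix ((List.take_prefix _ _).isInfix.trans (List.drop_suffix _ _).isInfix)) hcl
  have e0 : ((es.drop p).take (q - p))[0]'h0 = es[p]'(by omega) := by
    rw [hget 0 (by omega) h0]
    exact gec es (by omega) (show p + 0 = p by omega)
  rw [← e0]
  exact hmem _ (List.getElem_mem _)

lemma window_contains (hc : G.IsCycle cs) (es : List G.E) (hch : es.Chain' (R G)) (p : ℕ)
    (hpm : p + cs.length ≤ es.length) (h0 : 0 < cs.length)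
    (hall : ∀ t (_ : t < cs.length), es[p+t]'(by omega) ∈ cs) : G.Contains cs es := by
  obtain ⟨k, hk, hke⟩ := List.mem_iff_getElem.mp (hall 0 h0)
  have key : ∀ t, t < cs.length → ∀ (hpt : p + t < es.length),
      es[p+t]'hpt = cs[(t+k) % cs.length]'(Nat.mod_lt _ h0) := by
    intro t
    induction t with
    | zero =>
      intro ht hpt
      rw [gec cs (Nat.mod_lt _ h0) (show (0+k) % cs.length = k by
        simp [Nat.mod_eq_of_lt hk])]
      exact hke.symm
    | succ t iht =>
      intro ht hpt
      have h1 : G.src (es[p+(t+1)]'hpt) = G.src (cs[(t+1+k) % cs.length]'(Nat.mod_lt _ h0)) := by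
        have hstep := chain_step es hch (p+t) (by omega)
        rw [gec es (by omega) (show p + t + 1 = p + (t+1) by omega)] at hstep
        rw [← hstep, iht (by omega) (by omega)]
        have hcg := cyc_getElem' hc (t+k) h0
        rw [hcg]
        rw [gec cs (Nat.mod_lt _ h0) (show (t+k+1) % cs.length = (t+1+k) % cs.length by
          congr 1; omega)]
      exact src_uniq hc (hall (t+1) ht) (List.getElem_mem _) h1
  refine ⟨k, ?_⟩
  have heq : cs.rotate k = (es.drop p).take cs.length := by
    apply List.ext_getElem
    · simp [List.length_rotate]
      omega
    · intro t h1 h2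
      rw [List.getElem_rotate]
      have h2' : t < cs.length := by simpa [List.length_rotate] using h1
      have hkey := key t h2' (by omega)
      simp only [List.getElem_take, List.getElem_drop]
      exact hkey.symm
  rw [heq]
  exact (List.take_prefix _ _).isInfix.trans (List.drop_suffix _ _).isInfix

lemma length_le (hV : Finite G.V) (hc : G.IsCycle cs)
    (honly : ∀ c' : List G.E, G.IsCycle c' → ∀ e, e ∈ c' ↔ e ∈ cs)
    (es : List G.E) (hch : es.Chain' (R G)) (hnc : ¬ G.Contains cs es) :
    es.length ≤ (Nat.card G.V + 1) * cs.length := by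
  haveI := hV
  have h0 : 0 < cs.length := List.length_pos_iff.mpr hc.1
  by_contra hlen
  push_neg at hlen
  set n := Nat.card G.V with hn
  have hwin : ∀ j : Fin (n+1), ∃ t, ∃ (h : (j:ℕ) * cs.length + t < es.length),
      t < cs.length ∧ es[(j:ℕ)*cs.length + t] ∉ cs := by
    intro j
    by_contra hno
    push_neg at hno
    apply hnc
    have hj1 : ((j:ℕ)+1) * cs.length ≤ (n+1) * cs.length :=
      Nat.mul_le_mul_right _ (by omega)
    have hble : (j:ℕ)*cs.length + cs.length ≤ es.length := by
      calc (j:ℕ)*cs.length + cs.length = ((j:ℕ)+1)*cs.length := by ring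
        _ ≤ (n+1)*cs.length := hj1
        _ ≤ es.length := le_of_lt hlen
    apply window_contains hc es hch ((j:ℕ)*cs.length) hble h0
    intro t ht
    exact hno t (by omega) ht
  choose t hlt hsmall hnot using hwin
  have key : ∀ j j' : Fin (n+1), j < j' →
      G.src (es[(j:ℕ)*cs.length + t j]'(hlt j)) = G.src (es[(j':ℕ)*cs.length + t j']'(hlt j')) →
      False := by
    intro j j' hjj heq
    have h1 : (j:ℕ)+1 ≤ (j':ℕ) := hjj
    have h2 : ((j:ℕ)+1)*cs.length ≤ (j':ℕ)*cs.length := Nat.mul_le_mul_right _ h1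
    have h2' : (j:ℕ)*cs.length + cs.length ≤ (j':ℕ)*cs.length := by
      calc (j:ℕ)*cs.length + cs.length = ((j:ℕ)+1)*cs.length := by ring
        _ ≤ (j':ℕ)*cs.length := h2
    have hord : (j:ℕ)*cs.length + t j < (j':ℕ)*cs.length + t j' := by
      have := hsmall j
      omega
    exact hnot j (chain_repeat_mem hc honly es hch hord (hlt j') heq)
  have hinj : Function.Injective
      (fun j : Fin (n+1) => G.src (es[(j:ℕ)*cs.length + t j]'(hlt j))) := by
    intro j j' heq
    by_contra hne
    rcases lt_or_gt_of_ne hne with h | h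
    · exact key j j' h heq
    · exact key j' j h heq.symm
  have hcard := Nat.card_le_card_of_injective _ hinj
  rw [Nat.card_eq_fintype_card, Fintype.card_fin] at hcard
  rw [← hn] at hcard
  omega

lemma isPathTo_mk (es : List G.E) (v : G.V) (hch : es.Chain' (R G))
    (hlast : ∀ h : es ≠ [], G.rng (es.getLast h) = v) : G.IsPathTo es v := by
  cases es with
  | nil => exact ⟨v, List.isChain_nil, fun _ => rfl, by simp, by simp⟩
  | cons e tl =>
    refine ⟨G.src e, hch, by simp, ?_, ?_⟩
    · intro f hf
      simp only [List.head?_cons, Option.some_inj] at hf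
      rw [← hf]
    · intro f hf
      have hne : (e::tl) ≠ [] := by simp
      rw [List.getLast?_eq_getLast hne, Option.some_inj] at hf
      rw [← hf]
      exact hlast hne

lemma exists_path (hc : G.IsCycle cs) (v : G.V) (e₀ : G.E) (he₀ : e₀ ∈ cs) (hv : G.src e₀ = v)
    (i : ℕ) (hi : i < cs.length) :
    ∃ es, G.IsPathTo es v ∧ ¬ G.Contains cs es ∧ es.length % cs.length = i := by
  have h0 : 0 < cs.length := by omega
  obtain ⟨k, hk, hke⟩ := List.mem_iff_getElem.mp he₀
  refine ⟨(cs.rotate k).drop (cs.length - i), ?_, ?_, ?_⟩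
  case refine_3 =>
    simp only [List.length_drop, List.length_rotate]
    rw [show cs.length - (cs.length - i) = i by omega]
    exact Nat.mod_eq_of_lt hi
  case refine_2 =>
    rintro ⟨k', hinf⟩
    have hle := hinf.length_le
    rw [List.length_rotate, List.length_drop, List.length_rotate] at hle
    omega
  case refine_1 =>
    have hlen : ((cs.rotate k).drop (cs.length - i)).length = i := by
      simp only [List.length_drop, List.length_rotate]; omega
    have hget : ∀ t, ∀ (h : t < ((cs.rotate k).drop (cs.length - i)).length),
        ((cs.rotate k).drop (cs.length - i))[t]'h
          = cs[(cs.length - i + t + k) % cs.length]'(Nat.mod_lt _ h0) := by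
      intro t h
      simp only [List.getElem_drop, List.getElem_rotate]
    apply isPathTo_mk _ v ?_ ?_
    · rw [List.Chain', List.isChain_iff_getElem]
      intro j hj
      rw [hget j (by omega), hget (j+1) (by omega)]
      have hcg := cyc_getElem' hc (cs.length - i + j + k) h0
      rw [gec cs (Nat.mod_lt _ h0) (show (cs.length - i + j + k + 1) % cs.length
        = (cs.length - i + (j+1) + k) % cs.length by congr 1; omega)] at hcg
      exact hcg
    · intro hne
      have hi1 : 0 < i := by
        rw [← hlen]; exact List.length_pos_iff.mpr hne
      rw [List.getLast_eq_getElem, hget (((cs.rotate k).drop (cs.length - i)).length - 1) (by omega)]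
      rw [gec cs (Nat.mod_lt _ h0)
        (show (cs.length - i + (((cs.rotate k).drop (cs.length - i)).length - 1) + k) % cs.length
          = (cs.length - 1 + k) % cs.length by congr 1; omega)]
      have hcg := cyc_getElem' hc (cs.length - 1 + k) h0
      rw [hcg]
      rw [gec cs (Nat.mod_lt _ h0) (show (cs.length - 1 + k + 1) % cs.length = k by
        rw [show cs.length - 1 + k + 1 = cs.length + k by omega]
        rw [Nat.add_mod_left, Nat.mod_eq_of_lt hk])]
      rw [hke]
      exact hv

end CometAux

/-- In a finite comet quiver whose cycle `c` has length `m`, for a vertex `v` of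
`c`: the set of paths ending at `v` not containing `c` is finite, and for each
`i < m` there is such a path whose length is congruent to `i` modulo `m`. -/
theorem stmt11 (G : Quiv) (hV : Finite G.V) (hE : Finite G.E)
    (c : List G.E) (hc : G.IsCycle c)
    (honly : ∀ c' : List G.E, G.IsCycle c' → ∀ e, e ∈ c' ↔ e ∈ c)
    (hconn : ∀ u : G.V, ∃ (es : List G.E) (w : G.V),
      G.IsPathFromTo u es w ∧ ∃ e ∈ c, G.src e = w)
    (m : ℕ) (hm : c.length = m)
    (v : G.V) (hv : ∃ e ∈ c, G.src e = v) :
    {es | G.IsPathTo es v ∧ ¬ G.Contains c es}.Finite ∧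
    ∀ i, i < m → ∃ es, G.IsPathTo es v ∧ ¬ G.Contains c es ∧ es.length % m = i := by
  haveI := hV
  haveI := hE
  subst hm
  obtain ⟨e₀, he₀, hv0⟩ := hv
  constructor
  · apply Set.Finite.subset (List.finite_length_le G.E ((Nat.card G.V + 1) * c.length))
    rintro es ⟨⟨u, hch, -, -, -⟩, hnc⟩
    exact CometAux.length_le hV hc honly es hch hnc
  · intro i hi
    exact CometAux.exists_path hc v e₀ he₀ hv0 i hi
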